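/- Let μ be a regular uncountable cardinal and S ⊆ μ stationary. Suppose D ⊆ S × S is a relation that concentrates on tails, i.e., for every α ∈ S there exists β(α) < α such that D(α,β) ↔ D(α,β') for all β, β' ∈ S with β(α) ≤ β, β' < α. Then there is a stationary S' ⊆ S such that D(α,β) ↔ D(α',β') for all pairs α > β and α' > β' from S'. -/

import Mathlib

/-- `o` is an accumulation point of `C`. -/
def IsAcc (o : Ordinal) (C : Set Ordinal) : Prop :=
  o ≠ 0 ∧ ∀ b < o, ∃ c ∈ C, b < c ∧ c < o

/-- `C` is closed and unbounded (a club) in `μ`. -/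
def IsClubIn (C : Set Ordinal) (μ : Ordinal) : Prop :=
  (∀ o < μ, IsAcc o C → o ∈ C) ∧ ∀ b < μ, ∃ c ∈ C, b < c ∧ c < μ

/-- `S` is a stationary subset of `μ`. -/
def IsStationaryIn (S : Set Ordinal) (μ : Ordinal) : Prop :=
  S ⊆ Set.Iio μ ∧ ∀ C : Set Ordinal, IsClubIn C μ → (S ∩ C).Nonempty

open Ordinal Set Cardinal

section Aux
variable {μ : Cardinal} {κ : Ordinal}

/-- supremum of a strictly increasing ω-sequence eventually inside a club lies in it. -/
lemma sup_mem_of_club {C : Set Ordinal} (hC : IsClubIn C κ)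
    (t : ℕ → Ordinal) (ht : StrictMono t) (hsup : (⨆ n, t n) < κ)
    (hmem : ∀ n, t (n + 1) ∈ C) : (⨆ n, t n) ∈ C := by
  have hbdd := Ordinal.bddAbove_range t
  have hle : ∀ n, t n ≤ ⨆ n, t n := fun n => le_ciSup hbdd n
  have hlt : ∀ n, t n < ⨆ n, t n :=
    fun n => lt_of_lt_of_le (ht (Nat.lt_succ_self n)) (hle (n + 1))
  apply hC.1 _ hsup
  refine ⟨fun h => absurd (h ▸ hlt 0) not_lt_zero, fun b hb => ?_⟩
  obtain ⟨n, hn⟩ := Ordinal.lt_iSup_iff.mp hb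
  exact ⟨t (n + 1), hmem n, hn.trans (ht (Nat.lt_succ_self n)), hlt (n + 1)⟩

lemma aleph0_lt_cof (hreg : μ.IsRegular) (hunc : ℵ₀ < μ) : ℵ₀ < μ.ord.cof := by
  rw [hreg.cof_eq]; exact hunc

lemma iSup_nat_lt_ord (hreg : μ.IsRegular) (hunc : ℵ₀ < μ)
    (t : ℕ → Ordinal) (ht : ∀ n, t n < μ.ord) : (⨆ n, t n) < μ.ord := by
  apply Ordinal.iSup_lt_ord_lift _ ht
  rw [Cardinal.mk_nat, Cardinal.lift_aleph0]
  exact aleph0_lt_cof hreg hunc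

lemma clubIn_iInter (hreg : μ.IsRegular) (hunc : ℵ₀ < μ)
    {δ : Ordinal} (hδ : δ < μ.ord) {C : Ordinal → Set Ordinal}
    (hC : ∀ i < δ, IsClubIn (C i) μ.ord) :
    IsClubIn {α | ∀ i < δ, α ∈ C i} μ.ord := by
  have hlim : Order.IsSuccLimit μ.ord := Cardinal.isSuccLimit_ord hreg.aleph0_le
  constructor
  · intro o ho hacc i hi
    refine (hC i hi).1 o ho ⟨hacc.1, fun b hb => ?_⟩
    obtain ⟨c, hc, h1, h2⟩ := hacc.2 b hb
    exact ⟨c, hc i hi, h1, h2⟩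
  · intro b hb
    -- a step function
    have step : ∀ x < μ.ord, ∃ y, x < y ∧ y < μ.ord ∧
        ∀ i < δ, ∃ c ∈ C i, x < c ∧ c ≤ y := by
      intro x hx
      have hch : ∀ i (hi : i < δ), ∃ c, c ∈ C i ∧ x < c ∧ c < μ.ord := by
        intro i hi
        obtain ⟨c, h1, h2, h3⟩ := (hC i hi).2 x hx
        exact ⟨c, h1, h2, h3⟩
      choose f hf1 hf2 hf3 using hch
      refine ⟨max (x + 1) (Ordinal.bsup δ f), lt_max_iff.2 (Or.inl (lt_add_one x)),
        max_lt (hlim.succ_lt hx) ?_, fun i hi => ⟨f i hi, hf1 i hi, hf2 i hi,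
          le_max_iff.2 (Or.inr (Ordinal.le_bsup f i hi))⟩⟩
      apply Ordinal.bsup_lt_ord _ hf3
      rw [hreg.cof_eq]
      exact (Cardinal.lt_ord.mp hδ)
    choose! F hF1 hF2 hF3 using step
    let G : {x : Ordinal // x < μ.ord} → {x : Ordinal // x < μ.ord} :=
      fun x => ⟨F x.1, hF2 x.1 x.2⟩
    let t : ℕ → {x : Ordinal // x < μ.ord} := fun n => G^[n] ⟨b, hb⟩
    have htsucc : ∀ n, t (n + 1) = G (t n) := fun n => Function.iterate_succ_apply' G n _
    have htmono : StrictMono (fun n => (t n).1) := by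
      apply strictMono_nat_of_lt_succ
      intro n
      rw [htsucc n]
      exact hF1 _ (t n).2
    have hsup : (⨆ n, (t n).1) < μ.ord := iSup_nat_lt_ord hreg hunc _ (fun n => (t n).2)
    have hle : ∀ n, (t n).1 ≤ ⨆ n, (t n).1 := fun n => le_ciSup (Ordinal.bddAbove_range _) n
    have hlt : ∀ n, (t n).1 < ⨆ n, (t n).1 :=
      fun n => lt_of_lt_of_le (htmono (Nat.lt_succ_self n)) (hle (n + 1))
    refine ⟨⨆ n, (t n).1, ?_, hlt 0, hsup⟩
    intro i hi
    refine (hC i hi).1 _ hsup ⟨fun h => absurd (h ▸ hlt 0) not_lt_zero,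
      fun b' hb' => ?_⟩
    obtain ⟨n, hn⟩ := Ordinal.lt_iSup_iff.mp hb'
    obtain ⟨c, hc1, hc2, hc3⟩ := hF3 (t n).1 (t n).2 i hi
    refine ⟨c, hc1, hn.trans hc2, lt_of_le_of_lt ?_ (hlt (n + 1))⟩
    rw [htsucc n] at *
    exact hc3

lemma clubIn_diagInter (hreg : μ.IsRegular) (hunc : ℵ₀ < μ)
    {C : Ordinal → Set Ordinal} (hC : ∀ i, IsClubIn (C i) μ.ord) :
    IsClubIn {α | ∀ i < α, α ∈ C i} μ.ord := by
  constructor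
  · intro o ho hacc i hi
    refine (hC i).1 o ho ⟨hacc.1, fun b hb => ?_⟩
    obtain ⟨c, hc, h1, h2⟩ := hacc.2 (max b i) (max_lt hb hi)
    exact ⟨c, hc i ((le_max_right b i).trans_lt h1), (le_max_left b i).trans_lt h1, h2⟩
  · intro b hb
    have step : ∀ x < μ.ord, ∃ y, x < y ∧ y < μ.ord ∧ ∀ i < x, y ∈ C i := by
      intro x hx
      obtain ⟨c, hc1, hc2, hc3⟩ :=
        (clubIn_iInter hreg hunc hx (fun i _ => hC i)).2 x hx
      exact ⟨c, hc2, hc3, fun i hi => hc1 i hi⟩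
    choose! F hF1 hF2 hF3 using step
    let G : {x : Ordinal // x < μ.ord} → {x : Ordinal // x < μ.ord} :=
      fun x => ⟨F x.1, hF2 x.1 x.2⟩
    let t : ℕ → {x : Ordinal // x < μ.ord} := fun n => G^[n] ⟨b, hb⟩
    have htsucc : ∀ n, t (n + 1) = G (t n) := fun n => Function.iterate_succ_apply' G n _
    have htmono : StrictMono (fun n => (t n).1) := by
      apply strictMono_nat_of_lt_succ
      intro n
      rw [htsucc n]
      exact hF1 _ (t n).2
    have hsup : (⨆ n, (t n).1) < μ.ord := iSup_nat_lt_ord hreg hunc _ (fun n => (t n).2)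
    have hle : ∀ n, (t n).1 ≤ ⨆ n, (t n).1 := fun n => le_ciSup (Ordinal.bddAbove_range _) n
    have hlt : ∀ n, (t n).1 < ⨆ n, (t n).1 :=
      fun n => lt_of_lt_of_le (htmono (Nat.lt_succ_self n)) (hle (n + 1))
    refine ⟨⨆ n, (t n).1, ?_, hlt 0, hsup⟩
    intro i hi
    obtain ⟨m, hm⟩ := Ordinal.lt_iSup_iff.mp hi
    refine (hC i).1 _ hsup ⟨fun h => absurd (h ▸ hlt 0) not_lt_zero,
      fun b' hb' => ?_⟩
    obtain ⟨n0, hn0⟩ := Ordinal.lt_iSup_iff.mp hb'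
    set n := max n0 m with hn
    have hb'n : b' < (t n).1 := hn0.trans_le (htmono.monotone (le_max_left n0 m))
    have hin : i < (t n).1 := hm.trans_le (htmono.monotone (le_max_right n0 m))
    refine ⟨(t (n + 1)).1, ?_, hb'n.trans (htmono (Nat.lt_succ_self n)), hlt (n + 1)⟩
    rw [htsucc n]
    exact hF3 (t n).1 (t n).2 i hin

lemma fodor (hreg : μ.IsRegular) (hunc : ℵ₀ < μ)
    {S : Set Ordinal} (hS : IsStationaryIn S μ.ord) (f : Ordinal → Ordinal)
    (hf : ∀ α ∈ S, f α < α) :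
    ∃ γ, IsStationaryIn {α | α ∈ S ∧ f α = γ} μ.ord := by
  by_contra h
  push_neg at h
  have hsub : ∀ γ, {α | α ∈ S ∧ f α = γ} ⊆ Set.Iio μ.ord :=
    fun γ α hα => hS.1 hα.1
  have hcl : ∀ γ, ∃ C, IsClubIn C μ.ord ∧ {α | α ∈ S ∧ f α = γ} ∩ C = ∅ := by
    intro γ
    have := h γ
    rw [IsStationaryIn] at this
    push_neg at this
    exact this (hsub γ)
  choose C hCclub hCne using hcl
  obtain ⟨α, hαS, hαΔ⟩ := hS.2 _ (clubIn_diagInter hreg hunc hCclub)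
  exact Set.eq_empty_iff_forall_notMem.mp (hCne (f α)) α ⟨⟨hαS, rfl⟩, hαΔ (f α) (hf α hαS)⟩

lemma clubIn_Iio (hreg : μ.IsRegular) : IsClubIn (Set.Iio μ.ord) μ.ord :=
  ⟨fun o ho _ => ho, fun b hb =>
    ⟨b + 1, (Cardinal.isSuccLimit_ord hreg.aleph0_le).succ_lt hb, lt_add_one b,
      (Cardinal.isSuccLimit_ord hreg.aleph0_le).succ_lt hb⟩⟩

lemma stationary_inter_Ioi (hreg : μ.IsRegular)
    {S : Set Ordinal} (hS : IsStationaryIn S μ.ord) {g : Ordinal} (hg : g < μ.ord) :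
    IsStationaryIn (S ∩ Set.Ioi g) μ.ord := by
  refine ⟨fun α hα => hS.1 hα.1, fun C hC => ?_⟩
  have hC' : IsClubIn (C ∩ Set.Ioi g) μ.ord := by
    constructor
    · intro o ho hacc
      obtain ⟨c, ⟨hcC, hcg⟩, h1, h2⟩ := hacc.2 0 (pos_iff_ne_zero.2 hacc.1)
      refine ⟨hC.1 o ho ⟨hacc.1, fun b hb => ?_⟩, hcg.trans h2⟩
      obtain ⟨d, hd, hd1, hd2⟩ := hacc.2 b hb
      exact ⟨d, hd.1, hd1, hd2⟩
    · intro b hb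
      obtain ⟨c, hc, h1, h2⟩ := hC.2 (max b g) (max_lt hb hg)
      exact ⟨c, ⟨hc, (le_max_right b g).trans_lt h1⟩, (le_max_left b g).trans_lt h1, h2⟩
  obtain ⟨α, hαS, hαC, hαg⟩ := hS.2 _ hC'
  exact ⟨α, ⟨hαS, hαg⟩, hαC⟩

lemma stationary_union (hreg : μ.IsRegular) (hunc : ℵ₀ < μ)
    {A B : Set Ordinal} (hA : A ⊆ Set.Iio μ.ord) (hB : B ⊆ Set.Iio μ.ord)
    (hS : IsStationaryIn (A ∪ B) μ.ord) :
    IsStationaryIn A μ.ord ∨ IsStationaryIn B μ.ord := by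
  by_contra h
  push_neg at h
  have hA' := h.1
  have hB' := h.2
  rw [IsStationaryIn] at hA' hB'
  push_neg at hA' hB'
  obtain ⟨CA, hCA, hCAe⟩ := hA' hA
  obtain ⟨CB, hCB, hCBe⟩ := hB' hB
  have h2 : (2 : Ordinal) < μ.ord := by
    rw [Cardinal.lt_ord]
    refine lt_of_lt_of_le ?_ hunc.le
    simpa using Cardinal.nat_lt_aleph0 2
  have hCfun : ∀ i < (2 : Ordinal),
      IsClubIn ((fun i => if i = 0 then CA else CB) i) μ.ord := by
    intro i _
    dsimp only
    split <;> assumption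
  obtain ⟨α, hαS, hα⟩ := hS.2 _ (clubIn_iInter hreg hunc h2 hCfun)
  have hαA : α ∈ CA := by simpa using hα 0 (by norm_num)
  have hαB : α ∈ CB := by simpa using hα 1 (by norm_num)
  rcases hαS with h | h
  · exact Set.eq_empty_iff_forall_notMem.mp hCAe α ⟨h, hαA⟩
  · exact Set.eq_empty_iff_forall_notMem.mp hCBe α ⟨h, hαB⟩

end Aux

/-- If a relation `D` on a stationary `S ⊆ μ` concentrates on tails, then `D`
is homogeneous on decreasing pairs from a stationary subset. -/
theorem stmt6 (μ : Cardinal) (hreg : μ.IsRegular) (hunc : Cardinal.aleph0 < μ)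
    (S : Set Ordinal) (hS : IsStationaryIn S μ.ord)
    (D : Ordinal → Ordinal → Prop)
    (hconc : ∀ α ∈ S, ∃ g < α, ∀ β ∈ S, ∀ β' ∈ S,
      g ≤ β → β < α → g ≤ β' → β' < α → (D α β ↔ D α β')) :
    ∃ S' ⊆ S, IsStationaryIn S' μ.ord ∧
      ∀ α ∈ S', ∀ β ∈ S', ∀ α' ∈ S', ∀ β' ∈ S',
        β < α → β' < α' → (D α β ↔ D α' β') := by
  choose! g hg1 hg2 using hconc
  obtain ⟨γ₀, hS₁⟩ := fodor hreg hunc hS g hg1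
  set S₁ : Set Ordinal := {α | α ∈ S ∧ g α = γ₀} with hS₁def
  have hγ₀ : γ₀ < μ.ord := by
    obtain ⟨α, hα, hαlt⟩ := hS₁.2 _ (clubIn_Iio hreg)
    exact (hα.2 ▸ hg1 α hα.1).trans hαlt
  have hS₂ := stationary_inter_Ioi hreg hS₁ hγ₀
  set S₂ : Set Ordinal := S₁ ∩ Set.Ioi γ₀ with hS₂def
  set c : Ordinal → Prop := fun α => ∃ β ∈ S, γ₀ ≤ β ∧ β < α ∧ D α β with hcdef
  -- key: on S₂, D α β is equivalent to c α for β ∈ S₂, β < α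
  have key : ∀ α ∈ S₂, ∀ β ∈ S₂, β < α → (D α β ↔ c α) := by
    intro α hα β hβ hβα
    obtain ⟨⟨hαS, hαg⟩, hαγ⟩ := hα
    obtain ⟨⟨hβS, _⟩, hβγ⟩ := hβ
    constructor
    · intro hD
      exact ⟨β, hβS, le_of_lt hβγ, hβα, hD⟩
    · rintro ⟨β', hβ'S, hβ'ge, hβ'lt, hD⟩
      have := hg2 α hαS β hβS β' hβ'S (hαg ▸ le_of_lt hβγ) hβα (hαg ▸ hβ'ge) hβ'lt
      exact this.mpr hD
  set A : Set Ordinal := {α ∈ S₂ | c α} with hAdef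
  set B : Set Ordinal := {α ∈ S₂ | ¬ c α} with hBdef
  have hsub₂ : S₂ ⊆ S := fun α hα => hα.1.1
  have hAB : A ∪ B = S₂ := by
    ext α
    constructor
    · rintro (h | h) <;> exact h.1
    · intro h
      by_cases hc : c α
      · exact Or.inl ⟨h, hc⟩
      · exact Or.inr ⟨h, hc⟩
  have hstat : IsStationaryIn A μ.ord ∨ IsStationaryIn B μ.ord := by
    apply stationary_union hreg hunc (fun α hα => hS.1 (hsub₂ hα.1))
      (fun α hα => hS.1 (hsub₂ hα.1))
    rw [hAB]
    exact hS₂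
  rcases hstat with h | h
  · refine ⟨A, fun α hα => hsub₂ hα.1, h, ?_⟩
    intro α hα β hβ α' hα' β' hβ' hβα hβ'α'
    rw [key α hα.1 β hβ.1 hβα, key α' hα'.1 β' hβ'.1 hβ'α']
    exact iff_of_true hα.2 hα'.2
  · refine ⟨B, fun α hα => hsub₂ hα.1, h, ?_⟩
    intro α hα β hβ α' hα' β' hβ' hβα hβ'α'
    rw [key α hα.1 β hβ.1 hβα, key α' hα'.1 β' hβ'.1 hβ'α']
    exact iff_of_false hα.2 hα'.2
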